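/- (Proposition on lifting asynchronous trajectories to refinements.) Let h be a refinement of f built from a DNF parameterisation in which no multivalued component is self-inhibited (i.e., for each j ∈ J, the variable x_j does not occur in any clause of f_j whose truth triggers an increase or decrease of component j). Let a, a' ∈ {0,1}^n with an asynchronous transition a → a' of f differing in one coordinate j₀, and let b, b' ∈ X be obtained from a, a' by replacing each coordinate equal to 1 with m_j. Then there is a trajectory from b to b' in the asynchronous dynamics of h, of length m_{j₀}. -/

import Mathlib

/-- Activity levels of the most permissive scheme: 0, 1, increasing, decreasing. -/
inductive MPLevel : Type
  | zero | one | inc | dec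
deriving DecidableEq

/-- The set γ(x̂) of Boolean states compatible with an m.p. state x̂. -/
def mpGamma {n : ℕ} (x : Fin n → MPLevel) : Set (Fin n → Bool) :=
  {x' | ∀ j, (x j = MPLevel.zero → x' j = false) ∧ (x j = MPLevel.one → x' j = true)}

/-- The set α(x) of Boolean states compatible with a multivalued state x. -/
def mvAlpha {n : ℕ} (m x : Fin n → ℕ) : Set (Fin n → Bool) :=
  {x' | ∀ j, (x j = 0 → x' j = false) ∧ (x j = m j → x' j = true)}

/-- Coordinatewise embedding of Boolean states into m.p. states. -/
def embBM {n : ℕ} (x : Fin n → Bool) : Fin n → MPLevel :=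
  fun j => if x j then MPLevel.one else MPLevel.zero

/-- Embedding of a Boolean state into X = ∏ {0,…,m_j}, sending 1 to m_j. -/
def embX {n : ℕ} (m : Fin n → ℕ) (x : Fin n → Bool) : Fin n → ℕ :=
  fun j => if x j then m j else 0

/-- Transition of the most permissive dynamics of f at coordinate j0. -/
def mpTransAt {n : ℕ} (f : (Fin n → Bool) → Fin n → Bool) (j0 : Fin n)
    (x y : Fin n → MPLevel) : Prop :=
  (∀ j, j ≠ j0 → y j = x j) ∧
    (((x j0 = MPLevel.zero ∨ x j0 = MPLevel.dec) ∧ (∃ x' ∈ mpGamma x, f x' j0 = true) ∧ y j0 = MPLevel.inc) ∨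
     ((x j0 = MPLevel.one ∨ x j0 = MPLevel.inc) ∧ (∃ x' ∈ mpGamma x, f x' j0 = false) ∧ y j0 = MPLevel.dec) ∨
     (x j0 = MPLevel.inc ∧ y j0 = MPLevel.one) ∨
     (x j0 = MPLevel.dec ∧ y j0 = MPLevel.zero))

/-- Transition of the most permissive dynamics of f. -/
def mpTrans {n : ℕ} (f : (Fin n → Bool) → Fin n → Bool) (x y : Fin n → MPLevel) : Prop :=
  ∃ j0, mpTransAt f j0 x y

/-- Transition of the partial J-most-permissive dynamics of f at coordinate j0. -/
def pmpTransAt {n : ℕ} (J : Set (Fin n)) (f : (Fin n → Bool) → Fin n → Bool) (j0 : Fin n)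
    (x y : Fin n → MPLevel) : Prop :=
  (∀ j, j ≠ j0 → y j = x j) ∧
    (((x j0 = MPLevel.zero ∨ x j0 = MPLevel.dec) ∧ (∃ x' ∈ mpGamma x, f x' j0 = true) ∧ y j0 = MPLevel.inc) ∨
     ((x j0 = MPLevel.one ∨ x j0 = MPLevel.inc) ∧ (∃ x' ∈ mpGamma x, f x' j0 = false) ∧ y j0 = MPLevel.dec) ∨
     (x j0 = MPLevel.inc ∧ y j0 = MPLevel.one) ∨
     (x j0 = MPLevel.dec ∧ y j0 = MPLevel.zero) ∨
     (j0 ∉ J ∧ x j0 = MPLevel.zero ∧ (∃ x' ∈ mpGamma x, f x' j0 = true) ∧ y j0 = MPLevel.one) ∨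
     (j0 ∉ J ∧ x j0 = MPLevel.one ∧ (∃ x' ∈ mpGamma x, f x' j0 = false) ∧ y j0 = MPLevel.zero))

/-- Transition of the partial J-most-permissive dynamics of f. -/
def pmpTrans {n : ℕ} (J : Set (Fin n)) (f : (Fin n → Bool) → Fin n → Bool)
    (x y : Fin n → MPLevel) : Prop :=
  ∃ j0, pmpTransAt J f j0 x y

/-- A state of X_{J m.p.}: coordinates outside J are Boolean. -/
def inXJ {n : ℕ} (J : Set (Fin n)) (x : Fin n → MPLevel) : Prop :=
  ∀ j, j ∉ J → (x j = MPLevel.zero ∨ x j = MPLevel.one)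

/-- Asynchronous transition of a Boolean model f. -/
def asyncTransB {n : ℕ} (f : (Fin n → Bool) → Fin n → Bool) (x y : Fin n → Bool) : Prop :=
  ∃ j0, f x j0 ≠ x j0 ∧ y j0 = f x j0 ∧ ∀ j, j ≠ j0 → y j = x j

/-- Asynchronous transition of a multivalued model h (one coordinate moves by 1 toward its target). -/
def asyncTrans {n : ℕ} (h : (Fin n → ℕ) → Fin n → ℕ) (x y : Fin n → ℕ) : Prop :=
  ∃ j0, h x j0 ≠ x j0 ∧ (∀ j, j ≠ j0 → y j = x j) ∧
    ((x j0 < h x j0 ∧ y j0 = x j0 + 1) ∨ (h x j0 < x j0 ∧ y j0 = x j0 - 1))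

/-- An m.p. state x̂ is compatible with a multivalued state x. -/
def mpCompat {n : ℕ} (m x : Fin n → ℕ) (xh : Fin n → MPLevel) : Prop :=
  ∀ j, (x j = 0 → xh j = MPLevel.zero) ∧ (x j = m j → xh j = MPLevel.one) ∧
    (0 < x j → x j < m j → (xh j = MPLevel.inc ∨ xh j = MPLevel.dec))

/-- h is a multivalued model on X = ∏ {0,…,m_j}: maps X to X, moving each coordinate by at most 1. -/
def isMVModel {n : ℕ} (m : Fin n → ℕ) (h : (Fin n → ℕ) → Fin n → ℕ) : Prop :=
  ∀ x, (∀ j, x j ≤ m j) → ∀ j, h x j ≤ m j ∧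
    (h x j = x j ∨ h x j = x j + 1 ∨ h x j + 1 = x j)

/-- h is a multivalued refinement of the Boolean model f. -/
def isRefinement {n : ℕ} (m : Fin n → ℕ) (f : (Fin n → Bool) → Fin n → Bool)
    (h : (Fin n → ℕ) → Fin n → ℕ) : Prop :=
  ∀ x, (∀ j, x j ≤ m j) → ∀ j,
    (h x j < x j → ∃ x' ∈ mvAlpha m x, f x' j = false ∧ x' j = true) ∧
    (x j < h x j → ∃ x' ∈ mvAlpha m x, f x' j = true ∧ x' j = false)

/-- A literal in a DNF: a regulator index, a polarity, and a threshold (used in the multivalued reading). -/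
structure Lit (n : ℕ) where
  idx : Fin n
  pos : Bool
  thr : ℕ

/-- Boolean evaluation of a literal (threshold ignored). -/
def evalLitB {n : ℕ} (x : Fin n → Bool) (l : Lit n) : Bool :=
  if l.pos then x l.idx else !(x l.idx)

/-- Multivalued evaluation of a literal: x_idx ≥ thr+1 for a positive literal, x_idx < thr+1 otherwise. -/
def evalLitM {n : ℕ} (x : Fin n → ℕ) (l : Lit n) : Bool :=
  if l.pos then decide (l.thr + 1 ≤ x l.idx) else decide (x l.idx < l.thr + 1)

/-- Boolean evaluation of a DNF (list of conjunctive clauses). -/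
def evalDNFB {n : ℕ} (x : Fin n → Bool) (φ : List (List (Lit n))) : Bool :=
  φ.any fun c => c.all (evalLitB x)

/-- Multivalued evaluation of a DNF via the thresholds. -/
def evalDNFM {n : ℕ} (x : Fin n → ℕ) (φ : List (List (Lit n))) : Bool :=
  φ.any fun c => c.all (evalLitM x)

/-- Refinement built from the DNF threshold parameterisation:
h_j(x) = max(0, min(m_j, x_j + H_j(x))) with H_j(x) = +1 iff the multivalued DNF of f_j is true. -/
def hDNF {n : ℕ} (m : Fin n → ℕ) (φ : Fin n → List (List (Lit n)))
    (x : Fin n → ℕ) : Fin n → ℕ :=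
  fun j => if evalDNFM x (φ j) then min (m j) (x j + 1) else x j - 1


lemma litM_eq_litB {n : ℕ} (m : Fin n → ℕ) (a : Fin n → Bool) (x : Fin n → ℕ)
    (l : Lit n) (hthr : l.thr + 1 ≤ m l.idx) (hx : x l.idx = embX m a l.idx) :
    evalLitM x l = evalLitB a l := by
  unfold evalLitM evalLitB embX at *
  cases ha : a l.idx <;> simp [ha] at hx <;> cases l.pos <;> simp [hx] <;> omega

lemma clause_eq {n : ℕ} (m : Fin n → ℕ) (a : Fin n → Bool) (x : Fin n → ℕ)
    (c : List (Lit n))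
    (hthr : ∀ l ∈ c, l.thr + 1 ≤ m l.idx)
    (hx : ∀ l ∈ c, x l.idx = embX m a l.idx) :
    c.all (evalLitM x) = c.all (evalLitB a) := by
  induction c with
  | nil => rfl
  | cons l ls ih =>
    simp only [List.all_cons]
    rw [litM_eq_litB m a x l (hthr l List.mem_cons_self) (hx l List.mem_cons_self),
      ih (fun l hl => hthr l (List.mem_cons_of_mem _ hl))
         (fun l hl => hx l (List.mem_cons_of_mem _ hl))]

lemma dnf_eq {n : ℕ} (m : Fin n → ℕ) (a : Fin n → Bool) (x : Fin n → ℕ)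
    (φj : List (List (Lit n)))
    (hthr : ∀ c ∈ φj, ∀ l ∈ c, l.thr + 1 ≤ m l.idx)
    (hx : ∀ c ∈ φj, ∀ l ∈ c, x l.idx = embX m a l.idx) :
    evalDNFM x φj = evalDNFB a φj := by
  unfold evalDNFM evalDNFB
  induction φj with
  | nil => rfl
  | cons c cs ih =>
    simp only [List.any_cons]
    rw [ih (fun c hc => hthr c (List.mem_cons_of_mem _ hc))
        (fun c hc => hx c (List.mem_cons_of_mem _ hc)),
      clause_eq m a x c (hthr c List.mem_cons_self) (hx c List.mem_cons_self)]

/-- let h be the refinement of f built from a DNF threshold parameterisation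
with no self-inhibited multivalued component. If a → a' is an asynchronous transition of f
changing coordinate j₀, and b, b' are the embeddings of a, a' into X (sending 1 to m_j),
then there is an asynchronous trajectory of h from b to b' of length m_{j₀}. -/
theorem refinement_lifts_async {n : ℕ} (m : Fin n → ℕ) (hm : ∀ j, 1 ≤ m j)
    (φ : Fin n → List (List (Lit n)))
    (f : (Fin n → Bool) → Fin n → Bool)
    (hf : ∀ x j, f x j = evalDNFB x (φ j))
    (hthr : ∀ j, ∀ c ∈ φ j, ∀ l ∈ c, l.thr + 1 ≤ m l.idx)
    (hnsi : ∀ j, 1 < m j → ∀ c ∈ φ j, ∀ l ∈ c, l.idx ≠ j)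
    (a a' : Fin n → Bool) (j0 : Fin n)
    (h1 : f a j0 ≠ a j0) (h2 : a' j0 = f a j0) (h3 : ∀ j, j ≠ j0 → a' j = a j) :
    ∃ c : ℕ → (Fin n → ℕ), c 0 = embX m a ∧ c (m j0) = embX m a' ∧
      ∀ k < m j0, asyncTrans (hDNF m φ) (c k) (c (k + 1)) := by
  classical
  by_cases hfa : f a j0 = true
  · have ha : a j0 = false := by cases h : a j0 <;> simp_all
    refine ⟨fun k j => if j = j0 then min k (m j0) else embX m a j, ?_, ?_, ?_⟩
    · funext j
      by_cases hj : j = j0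
      · subst hj; simp [embX, ha]
      · simp [hj]
    · funext j
      by_cases hj : j = j0
      · subst hj; simp [embX, h2, hfa]
      · simp [hj, embX, h3 j hj]
    · intro k hk
      have heval : evalDNFM (fun j => if j = j0 then min k (m j0) else embX m a j) (φ j0) = true := by
        rw [← hfa, hf a j0]
        apply dnf_eq m a _ _ (hthr j0)
        intro c hc l hl
        by_cases hidx : l.idx = j0
        · have hm1 : m j0 = 1 := by
            by_contra hne
            exact hnsi j0 (by have := hm j0; omega) c hc l hl hidx
          have hk0 : k = 0 := by omega
          subst hk0
          simp [hidx, embX, ha]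
        · simp [hidx]
      have hh : hDNF m φ (fun j => if j = j0 then min k (m j0) else embX m a j) j0 = k + 1 := by
        simp only [hDNF]
        rw [heval]
        simp only [reduceIte]
        omega
      refine ⟨j0, ?_, ?_, Or.inl ⟨?_, ?_⟩⟩
      · beta_reduce; rw [hh]; simp only [reduceIte]; omega
      · intro j hj; simp [hj]
      · beta_reduce; rw [hh]; simp only [reduceIte]; omega
      · beta_reduce; simp only [reduceIte]; omega
  · have hfa' : f a j0 = false := by cases h : f a j0 <;> simp_all
    have ha : a j0 = true := by cases h : a j0 <;> simp_all
    refine ⟨fun k j => if j = j0 then m j0 - k else embX m a j, ?_, ?_, ?_⟩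
    · funext j
      by_cases hj : j = j0
      · subst hj; simp [embX, ha]
      · simp [hj]
    · funext j
      by_cases hj : j = j0
      · subst hj; simp [embX, h2, hfa']
      · simp [hj, embX, h3 j hj]
    · intro k hk
      have heval : evalDNFM (fun j => if j = j0 then m j0 - k else embX m a j) (φ j0) = false := by
        rw [← hfa', hf a j0]
        apply dnf_eq m a _ _ (hthr j0)
        intro c hc l hl
        by_cases hidx : l.idx = j0
        · have hm1 : m j0 = 1 := by
            by_contra hne
            exact hnsi j0 (by have := hm j0; omega) c hc l hl hidx
          have hk0 : k = 0 := by omega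
          subst hk0
          simp [hidx, embX, ha]
        · simp [hidx]
      have hh : hDNF m φ (fun j => if j = j0 then m j0 - k else embX m a j) j0 = m j0 - k - 1 := by
        simp only [hDNF]
        rw [heval]
        simp only [Bool.false_eq_true, reduceIte]
      refine ⟨j0, ?_, ?_, Or.inr ⟨?_, ?_⟩⟩
      · beta_reduce; rw [hh]; simp only [reduceIte]; omega
      · intro j hj; simp [hj]
      · beta_reduce; rw [hh]; simp only [reduceIte]; omega
      · beta_reduce; simp only [reduceIte]; omega
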